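/- Let n ≥ 2, let 1 ≤ k ≤ n−1, and let a_1, …, a_n be real numbers with a_1 + ⋯ + a_n = 0, a_1² + ⋯ + a_n² = 1, such that a_i ≥ 0 for i ≤ k and a_i ≤ 0 for i > k. Then ∑_{i=1}^{n} |a_i| ≤ 2√(k(n−k)/n). -/
import Mathlib

open Finset

theorem stmt_4 (n k : ℕ) (hn : 2 ≤ n) (hk1 : 1 ≤ k) (hk2 : k ≤ n - 1) (a : Fin n → ℝ)
    (hsum : ∑ j, a j = 0) (hnorm : ∑ j, (a j) ^ 2 = 1)
    (hpos : ∀ i : Fin n, (i : ℕ) < k → 0 ≤ a i)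
    (hneg : ∀ i : Fin n, k ≤ (i : ℕ) → a i ≤ 0) :
    ∑ j, |a j| ≤ 2 * Real.sqrt ((k * (n - k) : ℝ) / n) := by
  have hkn : k < n := by omega
  set P := Finset.univ.filter (fun i : Fin n => (i : ℕ) < k) with hP
  set N := Finset.univ.filter (fun i : Fin n => ¬ (i : ℕ) < k) with hN
  have hsplit : ∀ f : Fin n → ℝ, ∑ j ∈ P, f j + ∑ j ∈ N, f j = ∑ j, f j := fun f =>
    Finset.sum_filter_add_sum_filter_not _ _ f
  have hcardP : P.card = k := by
    have : P = Finset.map ⟨fun i : Fin k => Fin.castLE hkn.le i, fun a b h => by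
        simpa [Fin.ext_iff] using congrArg Fin.val h⟩ Finset.univ := by
      ext i
      simp [hP, Fin.ext_iff]
      constructor
      · intro h; exact ⟨⟨i, h⟩, rfl⟩
      · rintro ⟨j, hj⟩; rw [← hj]; exact j.isLt
    rw [this]; simp
  have hcardN : N.card = n - k := by
    have h := Finset.card_filter_add_card_filter_not (s := Finset.univ)
      (p := fun i : Fin n => (i : ℕ) < k)
    rw [← hP, ← hN] at h
    simp at h
    omega
  set S := ∑ j ∈ P, a j with hS
  set A := ∑ j ∈ P, (a j)^2 with hA
  have hSnn : 0 ≤ S := Finset.sum_nonneg fun i hi => hpos i (by simpa [hP] using hi)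
  have hAnn : 0 ≤ A := Finset.sum_nonneg fun i _ => sq_nonneg _
  have hBnn : 0 ≤ ∑ j ∈ N, (a j)^2 := Finset.sum_nonneg fun i _ => sq_nonneg _
  have hNsum : ∑ j ∈ N, a j = -S := by
    have := hsplit a; rw [hsum] at this; linarith
  have hNsq : ∑ j ∈ N, (a j)^2 = 1 - A := by
    have := hsplit (fun j => (a j)^2); rw [hnorm] at this; linarith
  have cs1 : S^2 ≤ k * A := by
    have := sq_sum_le_card_mul_sum_sq (s := P) (f := a)
    rw [hcardP] at this; exact_mod_cast this
  have cs2 : S^2 ≤ (n - k : ℕ) * (1 - A) := by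
    have := sq_sum_le_card_mul_sum_sq (s := N) (f := a)
    rw [hcardN, hNsum, hNsq] at this
    simpa using this
  have hcast : ((n - k : ℕ) : ℝ) = (n : ℝ) - k := by
    push_cast [Nat.cast_sub hkn.le]; ring
  have hkey : S^2 ≤ (k * ((n:ℝ) - k)) / n := by
    rw [le_div_iff₀ (by positivity : (0:ℝ) < n)]
    rw [hcast] at cs2
    nlinarith [cs1, cs2, hkn, sq_nonneg S]
  have habs : ∑ j, |a j| = 2 * S := by
    rw [← hsplit (fun j => |a j|)]
    have h1 : ∑ j ∈ P, |a j| = S := Finset.sum_congr rfl fun i hi =>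
      abs_of_nonneg (hpos i (by simpa [hP] using hi))
    have h2 : ∑ j ∈ N, |a j| = S := by
      have : ∑ j ∈ N, |a j| = ∑ j ∈ N, (- a j) := Finset.sum_congr rfl fun i hi =>
        abs_of_nonpos (hneg i (by have := Finset.mem_filter.mp hi; omega))
      rw [this, Finset.sum_neg_distrib, hNsum]; ring
    rw [h1, h2]; ring
  rw [habs]
  have : S ≤ Real.sqrt ((k * ((n:ℝ) - k)) / n) := by
    rw [← Real.sqrt_sq hSnn]
    exact Real.sqrt_le_sqrt hkey
  linarith
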